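/- arXiv:2601.08280 — 2 statements merged into one kernel-verified Lean document; each statement's English description precedes it below -/
import Mathlib

section
/- (Bretagnolle–Huber inequality) For any two probability measures P and Q on the same measurable space and any event E, P(E) + Q(Eᶜ) ≥ (1/2) · exp(−KL(P‖Q)). -/
open MeasureTheory
open scoped ENNReal Classical

/-- Kullback–Leibler divergence `KL(P‖Q) = ∫ log(dP/dQ) dP`, with value `∞` when `P` is
not absolutely continuous with respect to `Q` (or the integral does not exist). -/
noncomputable def klDiv {Ω : Type*} [MeasurableSpace Ω] (P Q : Measure Ω) : ℝ≥0∞ :=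
  if P ≪ Q ∧ Integrable (fun x => Real.log (P.rnDeriv Q x).toReal) P then
    ENNReal.ofReal (∫ x, Real.log (P.rnDeriv Q x).toReal ∂P)
  else ⊤

lemma BH_sq_aux (x y : ℝ≥0∞) : (x + y) * (x + y) ≤ 2 * (x * x + y * y) := by
  have key : ∀ a b : ℝ≥0∞, a ≤ b → (a + b) * (a + b) ≤ 2 * (a * a + b * b) := by
    intro a b hab
    obtain ⟨d, rfl⟩ := exists_add_of_le hab
    have hL : (a + (a + d)) * (a + (a + d)) = (a * a * 4 + a * d * 4) + d * d := by ring
    have hR : 2 * (a * a + (a + d) * (a + d)) = (a * a * 4 + a * d * 4) + (d * d + d * d) := by ring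
    rw [hL, hR]
    exact add_le_add le_rfl le_self_add
  rcases le_total x y with h | h
  · exact key x y h
  · calc (x + y) * (x + y) = (y + x) * (y + x) := by ring
      _ ≤ 2 * (y * y + x * x) := key y x h
      _ = 2 * (x * x + y * y) := by ring

lemma BH_sqrt_half (r : ℝ≥0∞) : r ^ (2⁻¹ : ℝ) * r ^ (2⁻¹ : ℝ) = r := by
  rw [← ENNReal.rpow_add_of_nonneg _ _ (by norm_num) (by norm_num)]
  norm_num

/-- Cauchy–Schwarz step: `∫⁻_A √(dP/dQ) dQ ≤ (P A)^(1/2) * (Q A)^(1/2)`. -/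
lemma BH_holder {Ω : Type*} [MeasurableSpace Ω] (P Q : Measure Ω)
    [IsFiniteMeasure P] [IsFiniteMeasure Q] (hPQ : P ≪ Q) (A : Set Ω) (hA : MeasurableSet A) :
    ∫⁻ x in A, (P.rnDeriv Q x) ^ (2⁻¹ : ℝ) ∂Q ≤ (P A) ^ (2⁻¹ : ℝ) * (Q A) ^ (2⁻¹ : ℝ) := by
  have hpq : (2 : ℝ).HolderConjugate 2 := ⟨by norm_num, by norm_num, by norm_num⟩
  have hmeas : AEMeasurable (fun x => (P.rnDeriv Q x) ^ (2⁻¹ : ℝ)) (Q.restrict A) :=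
    ((P.measurable_rnDeriv Q).pow_const _).aemeasurable
  have hH := ENNReal.lintegral_mul_le_Lp_mul_Lq (Q.restrict A) hpq hmeas
    (aemeasurable_const (b := (1:ℝ≥0∞)))
  simp only [Pi.mul_apply, mul_one] at hH
  have h1 : ∀ r : ℝ≥0∞, (r ^ (2⁻¹ : ℝ)) ^ (2 : ℝ) = r := by
    intro r
    rw [← ENNReal.rpow_mul]
    norm_num
  simp only [h1, ENNReal.one_rpow, lintegral_one, Measure.restrict_apply,
    MeasurableSet.univ, Set.univ_inter] at hH
  rw [Measure.setLIntegral_rnDeriv hPQ A] at hH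
  refine hH.trans_eq ?_
  norm_num

/-- Core inequality: `exp(-KL) ≤ 2 (P E + Q Eᶜ)`. -/
lemma BH_core {Ω : Type*} [MeasurableSpace Ω] (P Q : Measure Ω)
    [IsProbabilityMeasure P] [IsProbabilityMeasure Q]
    (hPQ : P ≪ Q) (hf : Integrable (fun x => Real.log (P.rnDeriv Q x).toReal) P)
    (E : Set Ω) (hE : MeasurableSet E) :
    ENNReal.ofReal (Real.exp (-(∫ x, Real.log (P.rnDeriv Q x).toReal ∂P))) ≤
      2 * (P E + Q Eᶜ) := by
  set g : Ω → ℝ := fun x => (P.rnDeriv Q x).toReal with hg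
  set f : Ω → ℝ := fun x => Real.log (g x) with hfdef
  set u : Ω → ℝ := fun x => Real.exp (-(f x) / 2) with hu
  have hg_meas : Measurable g := (P.measurable_rnDeriv Q).ennreal_toReal
  have hg_nonneg : ∀ x, 0 ≤ g x := fun x => ENNReal.toReal_nonneg
  -- pointwise identity : u x * g x = sqrt (g x)
  have hug : ∀ x, u x * g x = Real.sqrt (g x) := by
    intro x
    by_cases hx : g x = 0
    · simp [hu, hfdef, hx, Real.log_zero]
    · have hx' : 0 < g x := lt_of_le_of_ne (hg_nonneg x) (Ne.symm hx)
      have h1 : u x = g x ^ (-(2⁻¹) : ℝ) := by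
        rw [hu, Real.rpow_def_of_pos hx']
        ring_nf
        rfl
      rw [h1, Real.sqrt_eq_rpow]
      nth_rewrite 2 [show g x = g x ^ (1:ℝ) from (Real.rpow_one _).symm]
      rw [← Real.rpow_add hx']
      norm_num
  -- integrability of sqrt ∘ g w.r.t. Q
  have hg_int : Integrable g Q := Measure.integrable_toReal_rnDeriv
  have hsqrt_int : Integrable (fun x => Real.sqrt (g x)) Q := by
    refine Integrable.mono' (((integrable_const (1:ℝ)).add hg_int).div_const 2)
      (Real.continuous_sqrt.measurable.comp hg_meas).aestronglyMeasurable ?_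
    refine Filter.Eventually.of_forall fun x => ?_
    have h1 : Real.sqrt (g x) ≤ (1 + g x) / 2 := by
      nlinarith [Real.sq_sqrt (hg_nonneg x), Real.sqrt_nonneg (g x),
        sq_nonneg (Real.sqrt (g x) - 1)]
    rw [Real.norm_eq_abs, abs_of_nonneg (Real.sqrt_nonneg _)]
    simpa using h1
  -- integrability of u w.r.t. P
  have hu_int : Integrable u P := by
    refine (MeasureTheory.integrable_rnDeriv_smul_iff hPQ).mp ?_
    have : (fun x => (P.rnDeriv Q x).toReal • u x) = fun x => Real.sqrt (g x) := by
      funext x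
      rw [smul_eq_mul, mul_comm]
      exact hug x
    rw [this]
    exact hsqrt_int
  -- Jensen's inequality for exp
  have hjensen : Real.exp (∫ x, -(f x) / 2 ∂P) ≤ ∫ x, u x ∂P := by
    have := convexOn_exp.map_integral_le (μ := P) (f := fun x => -(f x) / 2)
      Real.continuous_exp.continuousOn isClosed_univ
      (Filter.Eventually.of_forall fun x => Set.mem_univ _)
      ((hf.neg).div_const 2) ?_
    · exact this
    · exact hu_int
  -- transfer integral of u to Q
  have hint_eq : ∫ x, u x ∂P = ∫ x, Real.sqrt (g x) ∂Q := by
    rw [← MeasureTheory.integral_rnDeriv_smul hPQ (f := u)]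
    congr 1
    funext x
    rw [smul_eq_mul, mul_comm]
    exact hug x
  -- relate the Q-integral of sqrt to a lintegral
  set S : ℝ≥0∞ := ∫⁻ x, (P.rnDeriv Q x) ^ (2⁻¹ : ℝ) ∂Q with hS
  have hofReal_le : ENNReal.ofReal (∫ x, Real.sqrt (g x) ∂Q) ≤ S := by
    rw [integral_eq_lintegral_of_nonneg_ae
      (Filter.Eventually.of_forall fun x => Real.sqrt_nonneg _)
      (Real.continuous_sqrt.measurable.comp hg_meas).aestronglyMeasurable]
    have heq : ∫⁻ x, ENNReal.ofReal (Real.sqrt (g x)) ∂Q = S := by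
      refine lintegral_congr_ae ?_
      filter_upwards [Measure.rnDeriv_lt_top P Q] with x hx
      rw [Real.sqrt_eq_rpow,
        ← ENNReal.ofReal_rpow_of_nonneg ENNReal.toReal_nonneg
          (by norm_num : (0:ℝ) ≤ 1 / 2),
        ENNReal.ofReal_toReal hx.ne]
      norm_num
    rw [heq]
    exact ENNReal.ofReal_toReal_le
  -- Hölder bound on S
  have hS_le : S ≤ (P E) ^ (2⁻¹ : ℝ) + (Q Eᶜ) ^ (2⁻¹ : ℝ) := by
    have hsplit : S = (∫⁻ x in E, (P.rnDeriv Q x) ^ (2⁻¹ : ℝ) ∂Q) +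
        ∫⁻ x in Eᶜ, (P.rnDeriv Q x) ^ (2⁻¹ : ℝ) ∂Q :=
      (lintegral_add_compl _ hE).symm
    rw [hsplit]
    have h1 := BH_holder P Q hPQ E hE
    have h2 := BH_holder P Q hPQ Eᶜ hE.compl
    calc (∫⁻ x in E, (P.rnDeriv Q x) ^ (2⁻¹ : ℝ) ∂Q) +
          ∫⁻ x in Eᶜ, (P.rnDeriv Q x) ^ (2⁻¹ : ℝ) ∂Q
        ≤ (P E) ^ (2⁻¹ : ℝ) * (Q E) ^ (2⁻¹ : ℝ) +
          (P Eᶜ) ^ (2⁻¹ : ℝ) * (Q Eᶜ) ^ (2⁻¹ : ℝ) := add_le_add h1 h2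
      _ ≤ (P E) ^ (2⁻¹ : ℝ) * 1 + 1 * (Q Eᶜ) ^ (2⁻¹ : ℝ) := by
          gcongr
          · exact ENNReal.rpow_le_one prob_le_one (by norm_num)
          · exact ENNReal.rpow_le_one prob_le_one (by norm_num)
      _ = (P E) ^ (2⁻¹ : ℝ) + (Q Eᶜ) ^ (2⁻¹ : ℝ) := by rw [mul_one, one_mul]
  -- put everything together
  set I : ℝ := ∫ x, Real.log (P.rnDeriv Q x).toReal ∂P with hI
  have hhalf : ENNReal.ofReal (Real.exp (-I / 2)) ≤ S := by
    refine le_trans ?_ hofReal_le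
    apply ENNReal.ofReal_le_ofReal
    rw [← hint_eq]
    refine le_trans ?_ hjensen
    have : ∫ x, -(f x) / 2 ∂P = -I / 2 := by
      rw [integral_div, integral_neg]
    rw [this]
  have hexp : Real.exp (-I) = Real.exp (-I / 2) * Real.exp (-I / 2) := by
    rw [← Real.exp_add]; ring_nf
  calc ENNReal.ofReal (Real.exp (-I))
      = ENNReal.ofReal (Real.exp (-I / 2)) * ENNReal.ofReal (Real.exp (-I / 2)) := by
        rw [hexp, ENNReal.ofReal_mul (Real.exp_nonneg _)]
    _ ≤ S * S := mul_le_mul' hhalf hhalf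
    _ ≤ ((P E) ^ (2⁻¹ : ℝ) + (Q Eᶜ) ^ (2⁻¹ : ℝ)) *
        ((P E) ^ (2⁻¹ : ℝ) + (Q Eᶜ) ^ (2⁻¹ : ℝ)) := mul_le_mul' hS_le hS_le
    _ ≤ 2 * ((P E) ^ (2⁻¹ : ℝ) * (P E) ^ (2⁻¹ : ℝ) +
        (Q Eᶜ) ^ (2⁻¹ : ℝ) * (Q Eᶜ) ^ (2⁻¹ : ℝ)) := BH_sq_aux _ _
    _ = 2 * (P E + Q Eᶜ) := by rw [BH_sqrt_half, BH_sqrt_half]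

/-- Bretagnolle–Huber inequality: for probability measures `P, Q` and any event `E`,
`P(E) + Q(Eᶜ) ≥ (1/2) exp(−KL(P‖Q))` (the right-hand side being `0` when `KL = ∞`). -/
theorem stmt6 {Ω : Type*} [MeasurableSpace Ω] (P Q : Measure Ω)
    [IsProbabilityMeasure P] [IsProbabilityMeasure Q]
    (E : Set Ω) (hE : MeasurableSet E) :
    2⁻¹ * (if klDiv P Q = ⊤ then 0
      else ENNReal.ofReal (Real.exp (-(klDiv P Q).toReal))) ≤ P E + Q Eᶜ := by
  by_cases hKL : klDiv P Q = ⊤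
  · simp [hKL]
  · rw [if_neg hKL]
    by_cases h : P ≪ Q ∧ Integrable (fun x => Real.log (P.rnDeriv Q x).toReal) P
    · obtain ⟨hPQ, hf⟩ := h
      set I : ℝ := ∫ x, Real.log (P.rnDeriv Q x).toReal ∂P with hI
      have hkl : klDiv P Q = ENNReal.ofReal I := by
        rw [klDiv, if_pos ⟨hPQ, hf⟩]
      have hIle : I ≤ (klDiv P Q).toReal := by
        rw [hkl]
        rcases le_total I 0 with h0 | h0
        · rw [ENNReal.ofReal_eq_zero.mpr h0]
          simpa using h0
        · rw [ENNReal.toReal_ofReal h0]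
      have hmono : ENNReal.ofReal (Real.exp (-(klDiv P Q).toReal)) ≤
          ENNReal.ofReal (Real.exp (-I)) := by
        apply ENNReal.ofReal_le_ofReal
        exact Real.exp_le_exp.mpr (neg_le_neg hIle)
      have hcore := BH_core P Q hPQ hf E hE
      calc 2⁻¹ * ENNReal.ofReal (Real.exp (-(klDiv P Q).toReal))
          ≤ 2⁻¹ * ENNReal.ofReal (Real.exp (-I)) := mul_le_mul' le_rfl hmono
        _ ≤ 2⁻¹ * (2 * (P E + Q Eᶜ)) := mul_le_mul' le_rfl hcore
        _ = P E + Q Eᶜ := by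
            rw [← mul_assoc, ENNReal.inv_mul_cancel two_ne_zero ENNReal.ofNat_ne_top, one_mul]
    · exact absurd (by rw [klDiv, if_neg h]) hKL
end

section
/- (Remaining-signal lower bound in block-OMP) Let S ⊊ S* with |S*| = k, set S_R = S*\S, v the stacking of the true rows on S_R, and u_sig = (I − P_S) Ψ_{S_R} v. If λ_min(Ψ_{S*}^T Ψ_{S*}) ≥ αT, then ‖Ψ_{S_R}^T u_sig‖₂ ≥ αT·‖v‖₂, and consequently there exists j ∈ S_R with ‖Ψ_j^T u_sig‖₂ ≥ (αT/√k)·‖v‖₂. -/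
open Matrix

/-- Euclidean norm of a finitely-indexed real vector. -/
noncomputable def norm2 {n : Type*} [Fintype n] (v : n → ℝ) : ℝ :=
  Real.sqrt (∑ i, v i ^ 2)

/-- Horizontal concatenation of the design blocks `Ψ_j` over the index set `A`. -/
def blockCat {M T d : ℕ} (Ψ : Fin M → Matrix (Fin T) (Fin d) ℝ)
    (A : Finset (Fin M)) : Matrix (Fin T) (A × Fin d) ℝ :=
  fun t p => Ψ p.1.val t p.2

lemma norm2_nonneg {n : Type*} [Fintype n] (v : n → ℝ) : 0 ≤ norm2 v :=
  Real.sqrt_nonneg _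

lemma norm2_sq {n : Type*} [Fintype n] (v : n → ℝ) : norm2 v ^ 2 = ∑ i, v i ^ 2 :=
  Real.sq_sqrt (Finset.sum_nonneg fun i _ => sq_nonneg _)

/-- Sum over a block-indexed product as a double sum with an extension-by-zero. -/
lemma block_sum {M d : ℕ} (s : Finset (Fin M)) (F : Fin M → Fin d → ℝ → ℝ)
    (vec : ↥s × Fin d → ℝ) :
    ∑ p : ↥s × Fin d, F p.1.val p.2 (vec p) =
      ∑ j ∈ s, ∑ i, F j i (if h : j ∈ s then vec ⟨⟨j, h⟩, i⟩ else 0) := by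
  rw [Fintype.sum_prod_type, Finset.univ_eq_attach,
    ← Finset.sum_attach s (fun j => ∑ i, F j i (if h : j ∈ s then vec ⟨⟨j, h⟩, i⟩ else 0))]
  refine Finset.sum_congr rfl fun j _ => Finset.sum_congr rfl fun i _ => ?_
  rw [dif_pos j.prop]

lemma blockCat_mulVec {M T d : ℕ} (Ψ : Fin M → Matrix (Fin T) (Fin d) ℝ)
    (s : Finset (Fin M)) (vec : ↥s × Fin d → ℝ) (t : Fin T) :
    (blockCat Ψ s).mulVec vec t =
      ∑ j ∈ s, ∑ i, Ψ j t i * (if h : j ∈ s then vec ⟨⟨j, h⟩, i⟩ else 0) := by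
  have := block_sum s (fun j i r => Ψ j t i * r) vec
  simpa [mulVec, dotProduct, blockCat] using this

lemma block_sum_sq {M d : ℕ} (s : Finset (Fin M)) (vec : ↥s × Fin d → ℝ) :
    ∑ p : ↥s × Fin d, vec p ^ 2 =
      ∑ j ∈ s, ∑ i, (if h : j ∈ s then vec ⟨⟨j, h⟩, i⟩ else 0) ^ 2 := by
  have := block_sum s (fun _ _ r => r ^ 2) vec
  simpa using this

/-- Remaining-signal lower bound in block-OMP: with `S ⊊ S*`, `S_R = S* \ S`, `v` the
stacked true rows on `S_R` and `u_sig = (I − P_S)Ψ_{S_R} v`, the Gram lower bound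
`λ_min(Ψ_{S*}ᵀΨ_{S*}) ≥ αT` gives `‖Ψ_{S_R}ᵀ u_sig‖ ≥ αT‖v‖`, and hence some block
`j ∈ S_R` has `‖Ψ_jᵀ u_sig‖ ≥ (αT/√k)‖v‖`. -/
theorem stmt17 {M T d k : ℕ}
    (Ψ : Fin M → Matrix (Fin T) (Fin d) ℝ)
    (Wstar : Fin M → Fin d → ℝ)
    (Sstar S : Finset (Fin M)) (hSS : S ⊂ Sstar) (hk : Sstar.card = k)
    (α : ℝ) (hαT : 0 < α * T)
    (hinv : IsUnit ((blockCat Ψ S)ᵀ * blockCat Ψ S).det)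
    (hGram : ∀ x : ↥Sstar × Fin d → ℝ,
      α * T * (∑ p, x p ^ 2) ≤ x ⬝ᵥ ((blockCat Ψ Sstar)ᵀ * blockCat Ψ Sstar).mulVec x)
    (v : ↥(Sstar \ S) × Fin d → ℝ) (hv : v = fun p => Wstar p.1.val p.2)
    (usig : Fin T → ℝ)
    (husig : usig = (1 - blockCat Ψ S *
        ((blockCat Ψ S)ᵀ * blockCat Ψ S)⁻¹ * (blockCat Ψ S)ᵀ).mulVec
        ((blockCat Ψ (Sstar \ S)).mulVec v)) :
    α * T * norm2 v ≤ norm2 ((blockCat Ψ (Sstar \ S))ᵀ.mulVec usig) ∧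
    ∃ j ∈ Sstar \ S,
      α * T / Real.sqrt k * norm2 v ≤ norm2 ((Ψ j)ᵀ.mulVec usig) := by
  classical
  set A := blockCat Ψ S with hA
  set B := blockCat Ψ (Sstar \ S) with hB
  set G := Aᵀ * A with hG
  set w : ↥S × Fin d → ℝ := (G⁻¹ * Aᵀ).mulVec (B.mulVec v) with hw
  set g : ↥(Sstar \ S) × Fin d → ℝ := Bᵀ.mulVec usig with hg
  have hSsub : S ⊆ Sstar := hSS.1
  have hmat : Aᵀ * (1 - A * G⁻¹ * Aᵀ) = 0 := by
    rw [Matrix.mul_sub, Matrix.mul_one, ← Matrix.mul_assoc, ← Matrix.mul_assoc, ← hG,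
      Matrix.mul_nonsing_inv _ hinv, Matrix.one_mul, sub_self]
  have hAtu : Aᵀ.mulVec usig = 0 := by
    rw [husig, mulVec_mulVec, hmat, zero_mulVec]
  have hAw : A.mulVec w = (A * G⁻¹ * Aᵀ).mulVec (B.mulVec v) := by
    rw [hw, mulVec_mulVec, Matrix.mul_assoc]
  have husig' : usig = B.mulVec v - A.mulVec w := by
    rw [husig, sub_mulVec, one_mulVec, hAw]
  -- extensions by zero
  set v' : Fin M → Fin d → ℝ :=
    fun j i => if h : j ∈ Sstar \ S then v ⟨⟨j, h⟩, i⟩ else 0 with hv'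
  set w' : Fin M → Fin d → ℝ :=
    fun j i => if h : j ∈ S then w ⟨⟨j, h⟩, i⟩ else 0 with hw'
  set x : ↥Sstar × Fin d → ℝ := fun p => v' p.1.val p.2 - w' p.1.val p.2 with hx
  have hCx : (blockCat Ψ Sstar).mulVec x = usig := by
    funext t
    rw [husig']
    have hxsum : (blockCat Ψ Sstar).mulVec x t =
        ∑ j ∈ Sstar, ∑ i, Ψ j t i * (v' j i - w' j i) := by
      rw [blockCat_mulVec]
      refine Finset.sum_congr rfl fun j hj => Finset.sum_congr rfl fun i _ => ?_
      rw [dif_pos hj]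
    rw [hxsum]
    have hsplit : ∀ j ∈ Sstar, ∑ i, Ψ j t i * (v' j i - w' j i)
        = ∑ i, Ψ j t i * v' j i - ∑ i, Ψ j t i * w' j i := by
      intro j _
      rw [← Finset.sum_sub_distrib]
      exact Finset.sum_congr rfl fun i _ => by ring
    rw [Finset.sum_congr rfl hsplit, Finset.sum_sub_distrib]
    have h1 : ∑ j ∈ Sstar, ∑ i, Ψ j t i * v' j i = B.mulVec v t := by
      rw [hB, blockCat_mulVec]
      rw [← Finset.sum_subset (Finset.sdiff_subset : Sstar \ S ⊆ Sstar)]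
      intro j hj hj'
      refine Finset.sum_eq_zero fun i _ => ?_
      simp only [hv', dif_neg hj', mul_zero]
    have h2 : ∑ j ∈ Sstar, ∑ i, Ψ j t i * w' j i = A.mulVec w t := by
      rw [hA, blockCat_mulVec]
      rw [← Finset.sum_subset hSsub]
      intro j hj hj'
      refine Finset.sum_eq_zero fun i _ => ?_
      simp only [hw', dif_neg hj', mul_zero]
    rw [h1, h2]; rfl
  have hxv : ∑ p, v p ^ 2 ≤ ∑ p, x p ^ 2 := by
    have hx2 : ∑ p, x p ^ 2 = ∑ j ∈ Sstar, ∑ i, (v' j i - w' j i) ^ 2 := by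
      rw [block_sum_sq]
      refine Finset.sum_congr rfl fun j hj => Finset.sum_congr rfl fun i _ => ?_
      rw [dif_pos hj]
    have hv2 : ∑ p, v p ^ 2 = ∑ j ∈ Sstar \ S, ∑ i, v' j i ^ 2 := by
      rw [block_sum_sq]
    rw [hx2, hv2, ← Finset.sum_sdiff hSsub]
    have hfirst : ∑ j ∈ Sstar \ S, ∑ i, (v' j i - w' j i) ^ 2
        = ∑ j ∈ Sstar \ S, ∑ i, v' j i ^ 2 := by
      refine Finset.sum_congr rfl fun j hj => Finset.sum_congr rfl fun i _ => ?_
      have hzw : w' j i = 0 := by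
        simp only [hw', dif_neg (Finset.mem_sdiff.mp hj).2]
      rw [hzw, sub_zero]
    rw [hfirst]
    have : 0 ≤ ∑ j ∈ S, ∑ i, (v' j i - w' j i) ^ 2 :=
      Finset.sum_nonneg fun j _ => Finset.sum_nonneg fun i _ => sq_nonneg _
    linarith
  have hGx : α * T * (∑ p, x p ^ 2) ≤ ∑ t, usig t ^ 2 := by
    have h := hGram x
    rw [← mulVec_mulVec, dotProduct_mulVec, vecMul_transpose, hCx] at h
    simpa [dotProduct, pow_two] using h
  have hdot : v ⬝ᵥ g = ∑ t, usig t ^ 2 := by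
    have h1 : v ⬝ᵥ g = (B.mulVec v) ⬝ᵥ usig := by
      rw [hg, dotProduct_mulVec, vecMul_transpose]
    have h2 : B.mulVec v = usig + A.mulVec w := by
      rw [husig', sub_add_cancel]
    have h3 : (A.mulVec w) ⬝ᵥ usig = 0 := by
      rw [dotProduct_comm, dotProduct_mulVec, ← mulVec_transpose, hAtu, zero_dotProduct]
    rw [h1, h2, add_dotProduct, h3, add_zero]
    simp [dotProduct, pow_two]
  -- first conclusion
  have hv0 : 0 ≤ norm2 v := norm2_nonneg v
  have hg0 : 0 ≤ norm2 g := norm2_nonneg g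
  have key1 : α * T * (norm2 v) ^ 2 ≤ v ⬝ᵥ g := by
    rw [norm2_sq, hdot]
    calc α * T * ∑ p, v p ^ 2 ≤ α * T * ∑ p, x p ^ 2 :=
          mul_le_mul_of_nonneg_left hxv hαT.le
      _ ≤ ∑ t, usig t ^ 2 := hGx
  have hcs : (v ⬝ᵥ g) ^ 2 ≤ norm2 v ^ 2 * norm2 g ^ 2 := by
    rw [norm2_sq, norm2_sq]
    exact Finset.sum_mul_sq_le_sq_mul_sq Finset.univ v g
  have goal1 : α * T * norm2 v ≤ norm2 g := by
    rcases eq_or_lt_of_le hv0 with h0 | hpos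
    · rw [← h0, mul_zero]; exact hg0
    · have hp : 0 < v ⬝ᵥ g :=
        lt_of_lt_of_le (by positivity) key1
      have hcs' : (v ⬝ᵥ g) ^ 2 ≤ (norm2 v * norm2 g) ^ 2 := by
        rw [mul_pow]; exact hcs
      have hab : v ⬝ᵥ g ≤ norm2 v * norm2 g :=
        (pow_le_pow_iff_left₀ hp.le (mul_nonneg hv0 hg0) two_ne_zero).mp hcs'
      have h4 : (α * T * norm2 v) * norm2 v ≤ norm2 g * norm2 v := by
        calc (α * T * norm2 v) * norm2 v = α * T * norm2 v ^ 2 := by ring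
          _ ≤ v ⬝ᵥ g := key1
          _ ≤ norm2 v * norm2 g := hab
          _ = norm2 g * norm2 v := by ring
      exact le_of_mul_le_mul_right h4 hpos
  refine ⟨goal1, ?_⟩
  -- second conclusion
  set f : Fin M → ℝ := fun j => ∑ i, ((Ψ j)ᵀ.mulVec usig i) ^ 2 with hf
  have hgf : ∑ p, g p ^ 2 = ∑ j ∈ Sstar \ S, f j := by
    rw [block_sum_sq (Sstar \ S) g]
    refine Finset.sum_congr rfl fun j hj => Finset.sum_congr rfl fun i _ => ?_
    rw [dif_pos hj]
    rfl
  have hne : (Sstar \ S).Nonempty := Finset.sdiff_nonempty.mpr hSS.not_subset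
  obtain ⟨j₀, hj₀, hmax⟩ := Finset.exists_max_image (Sstar \ S) f hne
  have hf0 : ∀ j, 0 ≤ f j := fun j => Finset.sum_nonneg fun i _ => sq_nonneg _
  have hcard : ((Sstar \ S).card : ℝ) ≤ (k : ℝ) := by
    have := Finset.card_le_card (Finset.sdiff_subset : Sstar \ S ⊆ Sstar)
    rw [hk] at this
    exact_mod_cast this
  have hsum_le : ∑ j ∈ Sstar \ S, f j ≤ ((Sstar \ S).card : ℝ) * f j₀ := by
    have := Finset.sum_le_card_nsmul (Sstar \ S) f (f j₀) (fun j hj => hmax j hj)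
    simpa [nsmul_eq_mul] using this
  have hk0 : (0:ℝ) < (k : ℝ) := by
    have h1 : 0 < Sstar.card := Finset.card_pos.mpr ⟨j₀, (Finset.mem_sdiff.mp hj₀).1⟩
    rw [hk] at h1
    exact_mod_cast h1
  have hc0 : 0 ≤ α * T * norm2 v := mul_nonneg hαT.le hv0
  have hckey : (α * T * norm2 v) ^ 2 ≤ (k : ℝ) * f j₀ := by
    have h1 : (α * T * norm2 v) ^ 2 ≤ norm2 g ^ 2 := pow_le_pow_left₀ hc0 goal1 2
    rw [norm2_sq, hgf] at h1
    have h2 : ((Sstar \ S).card : ℝ) * f j₀ ≤ (k : ℝ) * f j₀ :=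
      mul_le_mul_of_nonneg_right hcard (hf0 j₀)
    linarith
  refine ⟨j₀, hj₀, ?_⟩
  have hrepr : norm2 ((Ψ j₀)ᵀ.mulVec usig) = Real.sqrt (f j₀) := rfl
  rw [hrepr]
  have hdivle : (α * T * norm2 v) ^ 2 / (k : ℝ) ≤ f j₀ := by
    rw [div_le_iff₀ hk0]
    linarith [hckey]
  calc α * T / Real.sqrt k * norm2 v
      = Real.sqrt ((α * T * norm2 v) ^ 2 / (k : ℝ)) := by
        rw [Real.sqrt_div (sq_nonneg _), Real.sqrt_sq hc0]
        ring
    _ ≤ Real.sqrt (f j₀) := Real.sqrt_le_sqrt hdivle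
end
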